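/- arXiv:0805.1971 — 9 statements merged into one kernel-verified Lean document; each statement's English description precedes it below -/
import Mathlib

section
/- Let E be a finite set, K a finite linearly ordered index set with minimum and maximum, and (A_k)_{k∈K} a covering collection of E (i.e. A_k ⊆ E, A_k ⊊ A_{k'} whenever k < k', A_{min K} = ∅ and A_{max K} = E). For x ∈ E let k_x denote the smallest k ∈ K with x ∈ A_k. Let (μ_θ)_{θ∈Θ} be a family of probability measures on E and fix α ∈ (0,1). Then for every θ* ∈ Θ, the set R_α(x) = {θ ∈ Θ : μ_θ(A_{k_x}) ≥ α} satisfies μ_θ*({x ∈ E : θ* ∈ R_α(x)}) ≥ 1 − α; that is, if X ∼ μ_θ* then P(θ* ∈ R_α(X)) ≥ 1 − α. -/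
open Finset

/-- **Coverage of the confidence region associated with a covering collection.**
`E` is a finite set, `K` a finite linearly ordered index set, `A` a covering
collection of `E` (strictly increasing, from `∅` to `E`), `kx x` the smallest
`k` with `x ∈ A k`, and `μ θ` a probability mass function on `E` for each
`θ ∈ Θ`.  The region `R_α(x) = {θ : μ_θ(A_{k_x}) ≥ α}` has coverage at least
`1 - α` under `μ θ*`. -/
theorem covering_collection_confidence_region
    {E K Θ : Type*} [Fintype E] [Fintype K] [LinearOrder K] [Nonempty K]
    (A : K → Finset E)
    (hmono : ∀ k k' : K, k < k' → A k ⊂ A k')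
    (hbot : A (Finset.univ.min' Finset.univ_nonempty) = ∅)
    (htop : A (Finset.univ.max' Finset.univ_nonempty) = Finset.univ)
    (kx : E → K)
    (hkx : ∀ x : E, x ∈ A (kx x) ∧ ∀ k : K, x ∈ A k → kx x ≤ k)
    (μ : Θ → E → ℝ)
    (hμ0 : ∀ θ : Θ, ∀ x : E, 0 ≤ μ θ x)
    (hμ1 : ∀ θ : Θ, ∑ x : E, μ θ x = 1)
    (α : ℝ) (hα : α ∈ Set.Ioo (0 : ℝ) 1)
    (θstar : Θ) :
    ∑ x ∈ Finset.univ.filter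
        (fun x : E => α ≤ ∑ j ∈ A (kx x), μ θstar j),
      μ θstar x ≥ 1 - α := by
  classical
  set p : E → Prop := fun x => α ≤ ∑ j ∈ A (kx x), μ θstar j with hp
  have hsplit : ∑ x ∈ Finset.univ.filter p, μ θstar x
      + ∑ x ∈ Finset.univ.filter (fun x => ¬ p x), μ θstar x = 1 := by
    rw [Finset.sum_filter_add_sum_filter_not]
    exact hμ1 θstar
  have hmono' : ∀ k k' : K, k ≤ k' → A k ⊆ A k' := by
    intro k k' hle
    rcases lt_or_eq_of_le hle with h | h
    · exact (hmono k k' h).subset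
    · rw [h]
  -- it suffices to show the complement has mass ≤ α
  have hcompl : ∑ x ∈ Finset.univ.filter (fun x => ¬ p x), μ θstar x ≤ α := by
    set S : Finset K := Finset.univ.filter (fun k => ∑ j ∈ A k, μ θstar j < α) with hS
    by_cases hSne : S.Nonempty
    · set kstar := S.max' hSne with hkstar
      have hkstarS : kstar ∈ S := S.max'_mem hSne
      have hkstarlt : ∑ j ∈ A kstar, μ θstar j < α := by
        simpa [hS] using hkstarS
      have hsub : Finset.univ.filter (fun x => ¬ p x) ⊆ A kstar := by
        intro x hx
        simp only [Finset.mem_filter, hp, not_le] at hx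
        have hxS : kx x ∈ S := by simp [hS, hx.2]
        exact hmono' _ _ (S.le_max' _ hxS) (hkx x).1
      calc ∑ x ∈ Finset.univ.filter (fun x => ¬ p x), μ θstar x
          ≤ ∑ x ∈ A kstar, μ θstar x :=
            Finset.sum_le_sum_of_subset_of_nonneg hsub (fun i _ _ => hμ0 θstar i)
        _ ≤ α := hkstarlt.le
    · have : Finset.univ.filter (fun x => ¬ p x) = ∅ := by
        rw [Finset.filter_eq_empty_iff]
        intro x _
        simp only [hp, not_not, not_le, not_lt]
        by_contra h
        push_neg at h
        exact hSne ⟨kx x, by simp [hS, h]⟩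
      rw [this]
      simp [le_of_lt hα.1]
  linarith
end

section
/- Let E be a finite set, (A_k)_{0≤k≤κ} a covering collection of E, and A'_k = E ∖ A_{κ−k} its symmetrized covering collection. Let (μ_θ)_{θ∈Θ} be a family of probability measures on E, α ∈ (0,1), and θ* ∈ Θ. Define, for each x ∈ E, R_{α/2}(x) = {θ ∈ Θ : μ_θ(A_{k_x}) > α/2} and R'_{α/2}(x) = {θ ∈ Θ : μ_θ(A'_{k'_x}) > α/2}, where k_x (resp. k'_x) is the smallest k with x ∈ A_k (resp. x ∈ A'_k). Then for X ∼ μ_θ*, the region R_{α/2}(X) ∩ R'_{α/2}(X) has coverage at least 1 − α: P(θ* ∈ R_{α/2}(X) ∩ R'_{α/2}(X)) ≥ 1 − α. -/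
open Finset

lemma bad_set_bound {E : Type*} [Fintype E] [DecidableEq E]
    (κ : ℕ) (B : ℕ → Finset E)
    (hmono : ∀ k k' : ℕ, k ≤ κ → k' ≤ κ → k ≤ k' → B k ⊆ B k')
    (k : E → ℕ) (hk1 : ∀ x, k x ≤ κ) (hk2 : ∀ x, x ∈ B (k x))
    (w : E → ℝ) (hw : ∀ x, 0 ≤ w x) (c : ℝ) (hc : 0 ≤ c) :
    ∑ x ∈ Finset.univ.filter (fun x => ¬ c < ∑ j ∈ B (k x), w j), w x ≤ c := by
  set S := Finset.univ.filter (fun x => ¬ c < ∑ j ∈ B (k x), w j) with hS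
  rcases S.eq_empty_or_nonempty with h | h
  · rw [h]; simpa using hc
  · obtain ⟨x0, hx0S, hx0max⟩ := S.exists_max_image k h
    have hsub : S ⊆ B (k x0) := by
      intro x hx
      exact hmono (k x) (k x0) (hk1 x) (hk1 x0) (hx0max x hx) (hk2 x)
    have h1 : ∑ x ∈ S, w x ≤ ∑ x ∈ B (k x0), w x :=
      Finset.sum_le_sum_of_subset_of_nonneg hsub (fun i _ _ => hw i)
    have h2 : ¬ c < ∑ j ∈ B (k x0), w j := (Finset.mem_filter.mp hx0S).2
    linarith [not_lt.mp h2]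

/-- **Symmetrization lemma: coverage of the two-sided region.**
For a covering collection `(A k)_{0 ≤ k ≤ κ}` of a finite set `E`, its
symmetrization `A' k = E \ A (κ - k)`, a family `(μ θ)` of probability
measures on `E`, and `α ∈ (0,1)`, the intersection of the regions
`R_{α/2}(x) = {θ : μ_θ(A (kx x)) > α/2}` and
`R'_{α/2}(x) = {θ : μ_θ(A' (kx' x)) > α/2}` has coverage at least `1 - α`
under `μ θ*`. -/
theorem symmetrized_covering_collection_coverage
    {E Θ : Type*} [Fintype E] [DecidableEq E]
    (κ : ℕ) (A A' : ℕ → Finset E)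
    (hbot : A 0 = ∅) (htop : A κ = Finset.univ)
    (hmono : ∀ k k' : ℕ, k ≤ κ → k' ≤ κ → k < k' → A k ⊂ A k')
    (hA' : ∀ k : ℕ, k ≤ κ → A' k = Finset.univ \ A (κ - k))
    (kx kx' : E → ℕ)
    (hkx : ∀ x : E, kx x ≤ κ ∧ x ∈ A (kx x) ∧
      ∀ k : ℕ, k ≤ κ → x ∈ A k → kx x ≤ k)
    (hkx' : ∀ x : E, kx' x ≤ κ ∧ x ∈ A' (kx' x) ∧
      ∀ k : ℕ, k ≤ κ → x ∈ A' k → kx' x ≤ k)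
    (μ : Θ → E → ℝ)
    (hμ0 : ∀ θ : Θ, ∀ x : E, 0 ≤ μ θ x)
    (hμ1 : ∀ θ : Θ, ∑ x : E, μ θ x = 1)
    (α : ℝ) (hα : α ∈ Set.Ioo (0 : ℝ) 1)
    (θstar : Θ) :
    ∑ x ∈ Finset.univ.filter (fun x : E =>
        α / 2 < (∑ j ∈ A (kx x), μ θstar j) ∧
        α / 2 < (∑ j ∈ A' (kx' x), μ θstar j)),
      μ θstar x ≥ 1 - α := by
  obtain ⟨hα0, hα1⟩ := hα
  have hc : (0 : ℝ) ≤ α / 2 := by linarith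
  -- nonstrict monotonicity of A
  have hAmono : ∀ k k' : ℕ, k ≤ κ → k' ≤ κ → k ≤ k' → A k ⊆ A k' := by
    intro k k' hk hk' hle
    rcases hle.lt_or_eq with h | h
    · exact (hmono k k' hk hk' h).subset
    · rw [h]
  -- nonstrict monotonicity of A'
  have hA'mono : ∀ k k' : ℕ, k ≤ κ → k' ≤ κ → k ≤ k' → A' k ⊆ A' k' := by
    intro k k' hk hk' hle
    rw [hA' k hk, hA' k' hk']
    exact Finset.sdiff_subset_sdiff (le_refl _)
      (hAmono (κ - k') (κ - k) (Nat.sub_le _ _) (Nat.sub_le _ _)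
        (Nat.sub_le_sub_left hle κ))
  set w := μ θstar with hw
  have hb1 : ∑ x ∈ Finset.univ.filter
      (fun x => ¬ α / 2 < ∑ j ∈ A (kx x), w j), w x ≤ α / 2 :=
    bad_set_bound κ A hAmono kx (fun x => (hkx x).1) (fun x => (hkx x).2.1)
      w (hμ0 θstar) (α / 2) hc
  have hb2 : ∑ x ∈ Finset.univ.filter
      (fun x => ¬ α / 2 < ∑ j ∈ A' (kx' x), w j), w x ≤ α / 2 :=
    bad_set_bound κ A' hA'mono kx' (fun x => (hkx' x).1) (fun x => (hkx' x).2.1)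
      w (hμ0 θstar) (α / 2) hc
  set P1 := fun x : E => α / 2 < ∑ j ∈ A (kx x), w j
  set P2 := fun x : E => α / 2 < ∑ j ∈ A' (kx' x), w j
  have hsplit : ∑ x ∈ Finset.univ.filter (fun x => P1 x ∧ P2 x), w x
      + ∑ x ∈ Finset.univ.filter (fun x => ¬ (P1 x ∧ P2 x)), w x = 1 := by
    rw [Finset.sum_filter_add_sum_filter_not]
    exact hμ1 θstar
  have hsub : Finset.univ.filter (fun x => ¬ (P1 x ∧ P2 x)) ⊆
      Finset.univ.filter (fun x => ¬ P1 x) ∪ Finset.univ.filter (fun x => ¬ P2 x) := by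
    intro x hx
    simp only [Finset.mem_filter, Finset.mem_univ, true_and, not_and_or] at hx
    simp only [Finset.mem_union, Finset.mem_filter, Finset.mem_univ, true_and]
    exact hx
  have hbad : ∑ x ∈ Finset.univ.filter (fun x => ¬ (P1 x ∧ P2 x)), w x ≤ α := by
    calc ∑ x ∈ Finset.univ.filter (fun x => ¬ (P1 x ∧ P2 x)), w x
        ≤ ∑ x ∈ Finset.univ.filter (fun x => ¬ P1 x)
            ∪ Finset.univ.filter (fun x => ¬ P2 x), w x :=
          Finset.sum_le_sum_of_subset_of_nonneg hsub (fun i _ _ => hμ0 θstar i)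
      _ ≤ ∑ x ∈ Finset.univ.filter (fun x => ¬ P1 x), w x
            + ∑ x ∈ Finset.univ.filter (fun x => ¬ P2 x), w x := by
          have := Finset.sum_union_inter (s₁ := Finset.univ.filter (fun x => ¬ P1 x))
            (s₂ := Finset.univ.filter (fun x => ¬ P2 x)) (f := w)
          have hnn : 0 ≤ ∑ x ∈ Finset.univ.filter (fun x => ¬ P1 x)
              ∩ Finset.univ.filter (fun x => ¬ P2 x), w x :=
            Finset.sum_nonneg (fun i _ => hμ0 θstar i)
          linarith
      _ ≤ α := by linarith
  linarith
end

section
/- Fix integers d ≥ 2 and n ≥ 1, let E_d = {x ∈ {0,…,n}^d : x_1 + ⋯ + x_d = n}, and for a probability vector p ∈ Λ_d let μ_p(k) = (n!/(k_1!⋯k_d!)) ∏_i p_i^{k_i}. Then for every x ∈ E_d, the maximum likelihood estimator p̂ = x/n makes x a mode of the multinomial distribution M_d(n, p̂): for all k ∈ E_d, μ_{p̂}(x) ≥ μ_{p̂}(k). Consequently, for every α ∈ (0,1), p̂ belongs to the level-set confidence region R_α(x) = {p ∈ Λ_d : μ_p(x) ≥ u(p,α)}, where u(p,α) = sup{u ∈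 [0,1] : Σ_{k∈E_d, μ_p(k) ≥ u} μ_p(k) ≥ 1 − α}. -/
open Finset

/-- The support `E_d = {x ∈ {0,…,n}^d : Σ x_i = n}` of the multinomial
distribution, as a finset of `Fin d → Fin (n+1)`. -/
def multinomialSupport (d n : ℕ) : Finset (Fin d → Fin (n + 1)) :=
  Finset.univ.filter (fun x => ∑ i, (x i : ℕ) = n)

/-- The multinomial probability mass function
`μ_p(k) = (n!/(k₁!⋯k_d!)) ∏ i, p i ^ k i`. -/
noncomputable def multinomialPMF (d n : ℕ) (p : Fin d → ℝ)
    (k : Fin d → Fin (n + 1)) : ℝ :=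
  ((Nat.factorial n : ℝ) / ∏ i, (Nat.factorial (k i : ℕ) : ℝ)) *
    ∏ i, p i ^ (k i : ℕ)

/-- The level-set threshold
`u(p,α) = sup{u ∈ [0,1] : Σ_{k ∈ E_d, μ_p(k) ≥ u} μ_p(k) ≥ 1 - α}`. -/
noncomputable def levelSetThreshold (d n : ℕ) (p : Fin d → ℝ) (α : ℝ) : ℝ :=
  sSup {u : ℝ | u ∈ Set.Icc (0 : ℝ) 1 ∧
    1 - α ≤ ∑ k ∈ (multinomialSupport d n).filter
        (fun k => u ≤ multinomialPMF d n p k), multinomialPMF d n p k}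

lemma pow_mul_factorial_le (x m : ℕ) :
    x ^ m * x.factorial ≤ (x + m).factorial := by
  induction m with
  | zero => simp
  | succ m ih =>
    calc x ^ (m+1) * x.factorial = x * (x ^ m * x.factorial) := by ring
    _ ≤ x * (x + m).factorial := Nat.mul_le_mul_left _ ih
    _ ≤ (x + m + 1) * (x + m).factorial := Nat.mul_le_mul_right _ (by omega)
    _ = (x + (m + 1)).factorial := by
        rw [show x + (m+1) = (x + m) + 1 by ring, Nat.factorial_succ]

lemma factorial_le_pow_mul (k m : ℕ) :
    (k + m).factorial ≤ (k + m) ^ m * k.factorial := by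
  induction m with
  | zero => simp
  | succ m ih =>
    calc (k + (m+1)).factorial = (k + m + 1) * (k + m).factorial := by
          rw [show k + (m+1) = (k + m) + 1 by ring, Nat.factorial_succ]
    _ ≤ (k + m + 1) * ((k + m) ^ m * k.factorial) := Nat.mul_le_mul_left _ ih
    _ ≤ (k + m + 1) * ((k + m + 1) ^ m * k.factorial) :=
        Nat.mul_le_mul_left _ (Nat.mul_le_mul_right _ (Nat.pow_le_pow_left (by omega) m))
    _ = (k + (m+1)) ^ (m+1) * k.factorial := by ring_nf

lemma key_ineq (x k : ℕ) :
    x ^ k * x.factorial ≤ x ^ x * k.factorial := by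
  rcases le_total k x with h | h
  · obtain ⟨m, rfl⟩ := Nat.exists_eq_add_of_le h
    calc (k + m) ^ k * (k + m).factorial
        ≤ (k + m) ^ k * ((k + m) ^ m * k.factorial) :=
          Nat.mul_le_mul_left _ (factorial_le_pow_mul k m)
    _ = (k + m) ^ (k + m) * k.factorial := by rw [pow_add]; ring
  · obtain ⟨m, rfl⟩ := Nat.exists_eq_add_of_le h
    calc x ^ (x + m) * x.factorial = x ^ x * (x ^ m * x.factorial) := by
          rw [pow_add]; ring
    _ ≤ x ^ x * (x + m).factorial :=
        Nat.mul_le_mul_left _ (pow_mul_factorial_le x m)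

/-- **The MLE makes the observation a mode, and belongs to the level-set
region.** For `x ∈ E_d` and `p̂ = x/n`, `x` is a mode of `M_d(n, p̂)`, and for
every `α ∈ (0,1)` the MLE `p̂` belongs to the level-set confidence region
`R_α(x) = {p : μ_p(x) ≥ u(p,α)}`. -/
theorem mle_in_level_set_region
    (d n : ℕ) (hd : 2 ≤ d) (hn : 1 ≤ n)
    (x : Fin d → Fin (n + 1)) (hx : x ∈ multinomialSupport d n) :
    (∀ k ∈ multinomialSupport d n,
        multinomialPMF d n (fun i => (x i : ℝ) / n) k ≤
          multinomialPMF d n (fun i => (x i : ℝ) / n) x) ∧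
      ∀ α : ℝ, α ∈ Set.Ioo (0 : ℝ) 1 →
        levelSetThreshold d n (fun i => (x i : ℝ) / n) α ≤
          multinomialPMF d n (fun i => (x i : ℝ) / n) x := by
  have hn0 : (0:ℝ) < n := by exact_mod_cast hn
  have hxsum : ∑ i, (x i : ℕ) = n := by
    simpa [multinomialSupport] using hx
  -- rewrite of the pmf at p̂
  have hrw : ∀ k : Fin d → Fin (n+1), (∑ i, (k i : ℕ)) = n →
      multinomialPMF d n (fun i => (x i : ℝ) / n) k =
        ((Nat.factorial n : ℝ) * ∏ i, (x i : ℝ) ^ (k i : ℕ)) /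
          ((n : ℝ) ^ n * ∏ i, (Nat.factorial (k i : ℕ) : ℝ)) := by
    intro k hk
    have h1 : ∏ i, ((x i : ℝ) / n) ^ (k i : ℕ)
        = (∏ i, (x i : ℝ) ^ (k i : ℕ)) / (n : ℝ) ^ n := by
      calc ∏ i, ((x i : ℝ) / n) ^ (k i : ℕ)
          = ∏ i, ((x i : ℝ) ^ (k i : ℕ) / (n : ℝ) ^ (k i : ℕ)) := by
            simp [div_pow]
      _ = (∏ i, (x i : ℝ) ^ (k i : ℕ)) / ∏ i, (n : ℝ) ^ (k i : ℕ) :=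
            Finset.prod_div_distrib _ _
      _ = (∏ i, (x i : ℝ) ^ (k i : ℕ)) / (n : ℝ) ^ n := by
            rw [Finset.prod_pow_eq_pow_sum, hk]
    rw [multinomialPMF, h1]
    ring
  have hfacpos : ∀ k : Fin d → Fin (n+1),
      (0:ℝ) < ∏ i, (Nat.factorial (k i : ℕ) : ℝ) := by
    intro k
    exact Finset.prod_pos fun i _ => by exact_mod_cast (k i : ℕ).factorial_pos
  have hmode : ∀ k ∈ multinomialSupport d n,
      multinomialPMF d n (fun i => (x i : ℝ) / n) k ≤
        multinomialPMF d n (fun i => (x i : ℝ) / n) x := by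
    intro k hk
    have hksum : ∑ i, (k i : ℕ) = n := by
      simpa [multinomialSupport] using hk
    rw [hrw k hksum, hrw x hxsum]
    rw [div_le_div_iff₀ (by positivity) (by positivity)]
    have hnat : (∏ i, (x i : ℕ) ^ (k i : ℕ)) * ∏ i, Nat.factorial (x i : ℕ)
        ≤ (∏ i, (x i : ℕ) ^ (x i : ℕ)) * ∏ i, Nat.factorial (k i : ℕ) := by
      rw [← Finset.prod_mul_distrib, ← Finset.prod_mul_distrib]
      exact Finset.prod_le_prod' fun i _ => key_ineq (x i : ℕ) (k i : ℕ)
    have hreal : (∏ i, (x i : ℝ) ^ (k i : ℕ)) * ∏ i, (Nat.factorial (x i : ℕ) : ℝ)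
        ≤ (∏ i, (x i : ℝ) ^ (x i : ℕ)) * ∏ i, (Nat.factorial (k i : ℕ) : ℝ) := by
      exact_mod_cast hnat
    calc ((Nat.factorial n : ℝ) * ∏ i, (x i : ℝ) ^ (k i : ℕ)) *
          ((n : ℝ) ^ n * ∏ i, (Nat.factorial (x i : ℕ) : ℝ))
        = ((Nat.factorial n : ℝ) * (n : ℝ) ^ n) *
            ((∏ i, (x i : ℝ) ^ (k i : ℕ)) * ∏ i, (Nat.factorial (x i : ℕ) : ℝ)) := by
          ring
    _ ≤ ((Nat.factorial n : ℝ) * (n : ℝ) ^ n) *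
            ((∏ i, (x i : ℝ) ^ (x i : ℕ)) * ∏ i, (Nat.factorial (k i : ℕ) : ℝ)) :=
          mul_le_mul_of_nonneg_left hreal (by positivity)
    _ = ((Nat.factorial n : ℝ) * ∏ i, (x i : ℝ) ^ (x i : ℕ)) *
          ((n : ℝ) ^ n * ∏ i, (Nat.factorial (k i : ℕ) : ℝ)) := by ring
  refine ⟨hmode, ?_⟩
  intro α hα
  have hμx_nonneg : 0 ≤ multinomialPMF d n (fun i => (x i : ℝ) / n) x := by
    rw [hrw x hxsum]
    positivity
  apply Real.sSup_le _ hμx_nonneg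
  rintro u ⟨hu01, husum⟩
  by_contra hlt
  push_neg at hlt
  have hempty : (multinomialSupport d n).filter
      (fun k => u ≤ multinomialPMF d n (fun i => (x i : ℝ) / n) k) = ∅ := by
    rw [Finset.filter_eq_empty_iff]
    intro k hk hle
    exact absurd (le_trans hle (hmode k hk)) (not_le.mpr hlt)
  rw [hempty] at husum
  simp at husum
  linarith [hα.2]
end

section
/- Let μ be a probability measure on a finite set E such that the point masses are pairwise distinct (x ≠ y implies μ({x}) ≠ μ({y})). Fix α ∈ (0,1), let A(u) = {x ∈ E : μ({x}) ≥ u}, u(α) = sup{u ∈ [0,1] : μ(A(u)) ≥ 1 − α}, and K(α) = A(u(α)). Then K(α) has minimal cardinality among all sets of mass at least 1 − α: there is no subset B ⊆ E with μ(B) ≥ 1 − α and card(B) < card(K(α)). -/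
open Finset

/-- **Cardinality minimality of the level-set acceptance region.**
If the point masses of `μ` are pairwise distinct, then the level-set region
`K(α) = A(u(α))`, where `A(u) = {x : μ({x}) ≥ u}` and
`u(α) = sup{u ∈ [0,1] : μ(A(u)) ≥ 1 - α}`, has minimal cardinality among all
subsets of mass at least `1 - α`. -/
theorem level_set_region_minimal_cardinality
    {E : Type*} [Fintype E]
    (μ : E → ℝ)
    (hμ0 : ∀ x : E, 0 ≤ μ x)
    (hμ1 : ∑ x : E, μ x = 1)
    (hinj : ∀ x y : E, x ≠ y → μ x ≠ μ y)
    (α : ℝ) (hα : α ∈ Set.Ioo (0 : ℝ) 1)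
    (u : ℝ)
    (hu : u = sSup {v : ℝ | v ∈ Set.Icc (0 : ℝ) 1 ∧
      1 - α ≤ ∑ y ∈ Finset.univ.filter (fun y : E => v ≤ μ y), μ y}) :
    ¬ ∃ B : Finset E, 1 - α ≤ (∑ y ∈ B, μ y) ∧
      B.card < (Finset.univ.filter (fun y : E => u ≤ μ y)).card := by
  classical
  rintro ⟨B, hB, hcard⟩
  obtain ⟨hα0, hα1⟩ := hα
  have hBne : B.Nonempty := by
    rcases B.eq_empty_or_nonempty with h | h
    · exfalso; rw [h] at hB; simp at hB; linarith
    · exact h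
  obtain ⟨C, hCP, hCmax⟩ := Finset.exists_max_image (Finset.univ.powersetCard B.card)
    (fun D => ∑ y ∈ D, μ y) ⟨B, by simp [Finset.mem_powersetCard]⟩
  have hCcard : C.card = B.card := (Finset.mem_powersetCard.mp hCP).2
  have hCne : C.Nonempty := Finset.card_pos.mp (by rw [hCcard]; exact Finset.card_pos.mpr hBne)
  obtain ⟨y0, hy0C, hy0min⟩ := C.exists_min_image μ hCne
  have hBC : ∑ y ∈ B, μ y ≤ ∑ y ∈ C, μ y :=
    hCmax B (by simp [Finset.mem_powersetCard])
  have hswap : ∀ x, x ∉ C → μ x < μ y0 := by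
    intro x hx
    have hxe : x ∉ C.erase y0 := fun h => hx (Finset.mem_of_mem_erase h)
    have hD : insert x (C.erase y0) ∈ Finset.univ.powersetCard B.card := by
      rw [Finset.mem_powersetCard]
      refine ⟨Finset.subset_univ _, ?_⟩
      rw [Finset.card_insert_of_notMem hxe, Finset.card_erase_of_mem hy0C, hCcard]
      have : 0 < B.card := Finset.card_pos.mpr hBne
      omega
    have hsum := hCmax _ hD
    rw [Finset.sum_insert hxe, Finset.sum_erase_eq_sub hy0C] at hsum
    have hle : μ x ≤ μ y0 := by linarith
    have hne : μ x ≠ μ y0 := hinj x y0 (by rintro rfl; exact hx hy0C)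
    exact lt_of_le_of_ne hle hne
  have hfilter : Finset.univ.filter (fun y : E => μ y0 ≤ μ y) = C := by
    ext x
    simp only [Finset.mem_filter, Finset.mem_univ, true_and]
    constructor
    · intro h
      by_contra hx
      exact absurd h (not_le.mpr (hswap x hx))
    · exact hy0min x
  have hmem : μ y0 ∈ {v : ℝ | v ∈ Set.Icc (0 : ℝ) 1 ∧
      1 - α ≤ ∑ y ∈ Finset.univ.filter (fun y : E => v ≤ μ y), μ y} := by
    refine ⟨⟨hμ0 y0, ?_⟩, ?_⟩
    · calc μ y0 ≤ ∑ x : E, μ x :=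
          Finset.single_le_sum (fun x _ => hμ0 x) (Finset.mem_univ y0)
        _ = 1 := hμ1
    · rw [hfilter]; linarith
  have hbdd : BddAbove {v : ℝ | v ∈ Set.Icc (0 : ℝ) 1 ∧
      1 - α ≤ ∑ y ∈ Finset.univ.filter (fun y : E => v ≤ μ y), μ y} :=
    ⟨1, fun v hv => hv.1.2⟩
  have hle : μ y0 ≤ u := by rw [hu]; exact le_csSup hbdd hmem
  have hsub : Finset.univ.filter (fun y : E => u ≤ μ y) ⊆ C := by
    rw [← hfilter]
    intro x hx
    simp only [Finset.mem_filter, Finset.mem_univ, true_and] at hx ⊢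
    linarith
  have := Finset.card_le_card hsub
  rw [hCcard] at this
  omega
end

section
/- Let E be a finite set, (μ_θ)_{θ∈Θ} a family of probability measures on E, and α ∈ (0,1). For each θ ∈ Θ let K(θ,α) ⊆ E satisfy μ_θ(K(θ,α)) ≥ 1 − α, set γ(θ,α) = 1 − μ_θ(K(θ,α)), and define R_α(x) = {θ : x ∈ K(θ,α)}. Suppose for each θ ∈ Θ there exist V(θ,α) ⊆ K(θ,α) and W(θ,α) ⊆ E ∖ K(θ,α) with the same cardinality such that α − γ(θ,α) ≥ μ_θ(V(θ,α)) − μ_θ(W(θ,α)) > 0. Define L(θ,α) = (K(θ,α) ∖ V(θ,α)) ∪ W(θ,α) and T_α(x) = {θ : x ∈ L(θ,α)}. Then for every θ* ∈ Θ and X ∼ μ_θ*, one has 1 − α ≤ P(θ* ∈ T_α(X)) < P(θ* ∈ R_α(X)). -/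
open Finset

/-- **Improving a conservative confidence region by swapping points.**
Given acceptance sets `K(θ,α)` with `μ_θ(K(θ,α)) ≥ 1 - α` and, for each `θ`,
sets `V(θ,α) ⊆ K(θ,α)` and `W(θ,α) ⊆ E \ K(θ,α)` of the same cardinality with
`α - γ(θ,α) ≥ μ_θ(V(θ,α)) - μ_θ(W(θ,α)) > 0` where
`γ(θ,α) = 1 - μ_θ(K(θ,α))`, the modified region built from
`L(θ,α) = (K(θ,α) \ V(θ,α)) ∪ W(θ,α)` satisfies
`1 - α ≤ P(θ* ∈ T_α(X)) < P(θ* ∈ R_α(X))` for `X ∼ μ_θ*`. -/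
theorem improved_confidence_region_coverage
    {E Θ : Type*} [Fintype E] [DecidableEq E]
    (μ : Θ → E → ℝ)
    (hμ0 : ∀ θ : Θ, ∀ x : E, 0 ≤ μ θ x)
    (hμ1 : ∀ θ : Θ, ∑ x : E, μ θ x = 1)
    (α : ℝ) (hα : α ∈ Set.Ioo (0 : ℝ) 1)
    (K V W : Θ → Finset E)
    (hK : ∀ θ : Θ, 1 - α ≤ ∑ x ∈ K θ, μ θ x)
    (hV : ∀ θ : Θ, V θ ⊆ K θ)
    (hW : ∀ θ : Θ, W θ ⊆ Finset.univ \ K θ)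
    (hcard : ∀ θ : Θ, (V θ).card = (W θ).card)
    (hupper : ∀ θ : Θ,
      (∑ x ∈ V θ, μ θ x) - (∑ x ∈ W θ, μ θ x) ≤ α - (1 - ∑ x ∈ K θ, μ θ x))
    (hpos : ∀ θ : Θ, 0 < (∑ x ∈ V θ, μ θ x) - (∑ x ∈ W θ, μ θ x))
    (θstar : Θ) :
    1 - α ≤ (∑ x ∈ (K θstar \ V θstar) ∪ W θstar, μ θstar x) ∧
      (∑ x ∈ (K θstar \ V θstar) ∪ W θstar, μ θstar x) <
        ∑ x ∈ K θstar, μ θstar x := by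
  have hdisj : Disjoint (K θstar \ V θstar) (W θstar) := by
    have := hW θstar
    refine Finset.disjoint_left.2 fun x hx hxW => ?_
    have := this hxW
    simp only [Finset.mem_sdiff] at this hx
    exact this.2 hx.1
  have hsum : (∑ x ∈ (K θstar \ V θstar) ∪ W θstar, μ θstar x)
      = (∑ x ∈ K θstar, μ θstar x) - (∑ x ∈ V θstar, μ θstar x)
        + ∑ x ∈ W θstar, μ θstar x := by
    rw [Finset.sum_union hdisj, Finset.sum_sdiff_eq_sub (hV θstar)]
  constructor
  · have h := hupper θstar
    rw [hsum]; linarith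
  · have h := hpos θstar
    rw [hsum]; linarith
end

section
/- One-sided upper binomial confidence bound: fix n ≥ 1 and α ∈ (0,1), and for x ∈ {0,…,n} define U_α(x) = sup{θ ∈ [0,1] : Σ_{i=0}^{x} C(n,i) θ^i (1−θ)^{n−i} ≥ α}. Then for every p ∈ [0,1] and X ∼ Binom(n,p), P(p ≤ U_α(X)) ≥ 1 − α; equivalently, Σ_{x : p ≤ U_α(x)} C(n,x) p^x (1−p)^{n−x} ≥ 1 − α. -/
open Finset

/-- **Coverage of the one-sided upper Clopper–Pearson bound.**
With `U_α(x) = sup{θ ∈ [0,1] : Σ_{i=0}^x C(n,i) θ^i (1-θ)^(n-i) ≥ α}`, one has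
`P(p ≤ U_α(X)) ≥ 1 - α` for `X ∼ Binom(n,p)`. -/
theorem clopper_pearson_upper_coverage
    (n : ℕ) (hn : 1 ≤ n)
    (α : ℝ) (hα : α ∈ Set.Ioo (0 : ℝ) 1)
    (p : ℝ) (hp : p ∈ Set.Icc (0 : ℝ) 1) :
    1 - α ≤
      ∑ x ∈ (Finset.range (n + 1)).filter (fun x =>
          p ≤ sSup {θ : ℝ | θ ∈ Set.Icc (0 : ℝ) 1 ∧
            α ≤ ∑ i ∈ Finset.range (x + 1),
              (n.choose i : ℝ) * θ ^ i * (1 - θ) ^ (n - i)}),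
        (n.choose x : ℝ) * p ^ x * (1 - p) ^ (n - x) := by
  obtain ⟨hα0, hα1⟩ := hα
  obtain ⟨hp0, hp1⟩ := hp
  set f : ℕ → ℝ := fun x => (n.choose x : ℝ) * p ^ x * (1 - p) ^ (n - x) with hf
  have hf0 : ∀ x, 0 ≤ f x := by
    intro x
    have h1 : (0:ℝ) ≤ 1 - p := by linarith
    have := pow_nonneg hp0 x
    have := pow_nonneg h1 (n - x)
    positivity
  have htot : ∑ x ∈ range (n + 1), f x = 1 := by
    have h := add_pow p (1 - p) n
    simp only [add_sub_cancel, one_pow] at h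
    rw [show ∑ x ∈ range (n + 1), f x
        = ∑ x ∈ range (n + 1), p ^ x * (1 - p) ^ (n - x) * (n.choose x : ℝ) from
      Finset.sum_congr rfl (fun x _ => by simp [hf]; ring), ← h]
  set A : Finset ℕ := (range (n + 1)).filter (fun x => α ≤ ∑ i ∈ range (x + 1), f i) with hA
  -- Sum over A is at least 1 - α
  have hAsum : 1 - α ≤ ∑ x ∈ A, f x := by
    have hsplit := Finset.sum_filter_add_sum_filter_not (range (n + 1))
      (fun x => α ≤ ∑ i ∈ range (x + 1), f i) f
    set B : Finset ℕ := (range (n + 1)).filter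
      (fun x => ¬ α ≤ ∑ i ∈ range (x + 1), f i) with hB
    have hBle : ∑ x ∈ B, f x ≤ α := by
      rcases B.eq_empty_or_nonempty with h | h
      · simp [h]; linarith
      · set m := B.max' h with hm
        have hmB : m ∈ B := B.max'_mem h
        have hmlt : ∑ i ∈ range (m + 1), f i < α := by
          have := (Finset.mem_filter.mp hmB).2
          linarith [not_le.mp this]
        have hsub : B ⊆ range (m + 1) := by
          intro x hx
          exact Finset.mem_range.mpr (Nat.lt_succ_of_le (B.le_max' x hx))
        calc ∑ x ∈ B, f x ≤ ∑ i ∈ range (m + 1), f i :=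
              Finset.sum_le_sum_of_subset_of_nonneg hsub (fun i _ _ => hf0 i)
          _ ≤ α := le_of_lt hmlt
    have : ∑ x ∈ A, f x = 1 - ∑ x ∈ B, f x := by
      rw [← htot, ← hsplit]; ring
    rw [this]; linarith
  -- A is contained in the filter set of the statement
  refine le_trans hAsum (Finset.sum_le_sum_of_subset_of_nonneg ?_ (fun i _ _ => hf0 i))
  intro x hx
  obtain ⟨hxr, hxα⟩ := Finset.mem_filter.mp hx
  refine Finset.mem_filter.mpr ⟨hxr, ?_⟩
  have hpmem : p ∈ {θ : ℝ | θ ∈ Set.Icc (0 : ℝ) 1 ∧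
      α ≤ ∑ i ∈ Finset.range (x + 1),
        (n.choose i : ℝ) * θ ^ i * (1 - θ) ^ (n - i)} := ⟨⟨hp0, hp1⟩, hxα⟩
  exact le_csSup ⟨1, fun θ hθ => hθ.1.2⟩ hpmem
end

section
/- One-sided lower binomial confidence bound: fix n ≥ 1 and α ∈ (0,1), and for x ∈ {0,…,n} define L_α(x) = inf{θ ∈ [0,1] : Σ_{i=x}^{n} C(n,i) θ^i (1−θ)^{n−i} ≥ α}. Then for every p ∈ [0,1] and X ∼ Binom(n,p), P(L_α(X) ≤ p) ≥ 1 − α; equivalently, Σ_{x : L_α(x) ≤ p} C(n,x) p^x (1−p)^{n−x} ≥ 1 − α. -/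
open Finset

/-- **Coverage of the one-sided lower Clopper–Pearson bound.**
With `L_α(x) = inf{θ ∈ [0,1] : Σ_{i=x}^n C(n,i) θ^i (1-θ)^(n-i) ≥ α}`, one has
`P(L_α(X) ≤ p) ≥ 1 - α` for `X ∼ Binom(n,p)`. -/
theorem clopper_pearson_lower_coverage
    (n : ℕ) (hn : 1 ≤ n)
    (α : ℝ) (hα : α ∈ Set.Ioo (0 : ℝ) 1)
    (p : ℝ) (hp : p ∈ Set.Icc (0 : ℝ) 1) :
    1 - α ≤
      ∑ x ∈ (Finset.range (n + 1)).filter (fun x =>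
          sInf {θ : ℝ | θ ∈ Set.Icc (0 : ℝ) 1 ∧
            α ≤ ∑ i ∈ Finset.Icc x n,
              (n.choose i : ℝ) * θ ^ i * (1 - θ) ^ (n - i)} ≤ p),
        (n.choose x : ℝ) * p ^ x * (1 - p) ^ (n - x) := by
  obtain ⟨hp0, hp1⟩ := hp
  obtain ⟨hα0, hα1⟩ := hα
  set f : ℕ → ℝ := fun x => (n.choose x : ℝ) * p ^ x * (1 - p) ^ (n - x) with hf
  have hfnn : ∀ x, 0 ≤ f x := fun x =>
    mul_nonneg (mul_nonneg (Nat.cast_nonneg _) (pow_nonneg hp0 _))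
      (pow_nonneg (by linarith) _)
  set T : ℕ → ℝ := fun m => ∑ i ∈ Finset.Icc m n, f i with hT
  have htot : ∑ x ∈ Finset.range (n + 1), f x = 1 := by
    have h := add_pow p (1 - p) n
    have h1 : p + (1 - p) = 1 := by ring
    rw [h1, one_pow] at h
    rw [h]
    exact Finset.sum_congr rfl fun x _ => by simp [hf]; ring
  have hsplit : ∀ m, m ≤ n + 1 → (∑ x ∈ Finset.range m, f x) + T m = 1 := by
    intro m hm
    rw [← htot]
    have hIcc : T m = ∑ i ∈ Finset.Ico m (n + 1), f i := by rw [hT, Finset.Ico_add_one_right_eq_Icc]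
    rw [hIcc, Finset.range_eq_Ico, Finset.range_eq_Ico]
    exact Finset.sum_Ico_consecutive f (Nat.zero_le m) hm
  have hT1 : T (n + 1) < α := by
    have he : Finset.Icc (n + 1) n = ∅ := by
      apply Finset.Icc_eq_empty; omega
    simp only [hT, he, Finset.sum_empty]
    exact hα0
  have hex : ∃ m, T m < α := ⟨n + 1, hT1⟩
  set m := Nat.find hex with hm
  have hmα : T m < α := Nat.find_spec hex
  have hmle : m ≤ n + 1 := Nat.find_le hT1
  have hbelow : ∀ x, x < m → α ≤ T x := fun x hx => le_of_not_gt (Nat.find_min hex hx)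
  have hsub : Finset.range m ⊆ (Finset.range (n + 1)).filter (fun x =>
      sInf {θ : ℝ | θ ∈ Set.Icc (0 : ℝ) 1 ∧
        α ≤ ∑ i ∈ Finset.Icc x n,
          (n.choose i : ℝ) * θ ^ i * (1 - θ) ^ (n - i)} ≤ p) := by
    intro x hx
    rw [Finset.mem_range] at hx
    rw [Finset.mem_filter, Finset.mem_range]
    refine ⟨by omega, ?_⟩
    apply csInf_le
    · exact ⟨0, fun θ hθ => hθ.1.1⟩
    · exact ⟨⟨hp0, hp1⟩, hbelow x hx⟩
  calc 1 - α ≤ 1 - T m := by linarith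
    _ = ∑ x ∈ Finset.range m, f x := by have := hsplit m hmle; linarith
    _ ≤ _ := Finset.sum_le_sum_of_subset_of_nonneg hsub fun i _ _ => hfnn i
end

section
/- Clopper–Pearson coverage: fix n ≥ 1 and α ∈ (0,1), and for x ∈ {0,…,n} define L(x) = inf{θ ∈ [0,1] : Σ_{i=x}^{n} C(n,i) θ^i (1−θ)^{n−i} ≥ α/2} and U(x) = sup{θ ∈ [0,1] : Σ_{i=0}^{x} C(n,i) θ^i (1−θ)^{n−i} ≥ α/2}. Then for every p ∈ [0,1] and X ∼ Binom(n,p), the two-sided interval [L(X), U(X)] has coverage at least 1 − α: Σ_{x : L(x) ≤ p ≤ U(x)} C(n,x) p^x (1−p)^{n−x} ≥ 1 − α. -/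
open Finset

/-- **Coverage of the two-sided Clopper–Pearson interval.**
With `L(x) = inf{θ ∈ [0,1] : Σ_{i=x}^n C(n,i) θ^i (1-θ)^(n-i) ≥ α/2}` and
`U(x) = sup{θ ∈ [0,1] : Σ_{i=0}^x C(n,i) θ^i (1-θ)^(n-i) ≥ α/2}`, one has
`P(L(X) ≤ p ≤ U(X)) ≥ 1 - α` for `X ∼ Binom(n,p)`. -/
theorem clopper_pearson_coverage
    (n : ℕ) (hn : 1 ≤ n)
    (α : ℝ) (hα : α ∈ Set.Ioo (0 : ℝ) 1)
    (p : ℝ) (hp : p ∈ Set.Icc (0 : ℝ) 1) :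
    1 - α ≤
      ∑ x ∈ (Finset.range (n + 1)).filter (fun x =>
          sInf {θ : ℝ | θ ∈ Set.Icc (0 : ℝ) 1 ∧
            α / 2 ≤ ∑ i ∈ Finset.Icc x n,
              (n.choose i : ℝ) * θ ^ i * (1 - θ) ^ (n - i)} ≤ p ∧
          p ≤ sSup {θ : ℝ | θ ∈ Set.Icc (0 : ℝ) 1 ∧
            α / 2 ≤ ∑ i ∈ Finset.range (x + 1),
              (n.choose i : ℝ) * θ ^ i * (1 - θ) ^ (n - i)}),
        (n.choose x : ℝ) * p ^ x * (1 - p) ^ (n - x) := by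
  classical
  obtain ⟨hα0, hα1⟩ := hα
  obtain ⟨hp0, hp1⟩ := hp
  have hp1' : (0 : ℝ) ≤ 1 - p := by linarith
  set f : ℕ → ℝ := fun x => (n.choose x : ℝ) * p ^ x * (1 - p) ^ (n - x) with hfdef
  have hf0 : ∀ x, 0 ≤ f x := fun x =>
    mul_nonneg (mul_nonneg (Nat.cast_nonneg _) (pow_nonneg hp0 _)) (pow_nonneg hp1' _)
  set L : ℕ → ℝ := fun x => sInf {θ : ℝ | θ ∈ Set.Icc (0 : ℝ) 1 ∧
      α / 2 ≤ ∑ i ∈ Finset.Icc x n,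
        (n.choose i : ℝ) * θ ^ i * (1 - θ) ^ (n - i)} with hLdef
  set U : ℕ → ℝ := fun x => sSup {θ : ℝ | θ ∈ Set.Icc (0 : ℝ) 1 ∧
      α / 2 ≤ ∑ i ∈ Finset.range (x + 1),
        (n.choose i : ℝ) * θ ^ i * (1 - θ) ^ (n - i)} with hUdef
  -- total mass is 1
  have hsum : ∑ x ∈ Finset.range (n + 1), f x = 1 := by
    have h := add_pow p (1 - p) n
    have h1 : p + (1 - p) = (1 : ℝ) := by ring
    rw [h1, one_pow] at h
    rw [h]
    refine Finset.sum_congr rfl fun x _ => ?_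
    simp only [hfdef]
    ring
  -- if p is strictly below the lower bound, the upper tail at p is < α/2
  have hLmem : ∀ x, p < L x →
      (∑ i ∈ Finset.Icc x n, f i) < α / 2 := by
    intro x hpL
    by_contra h
    push_neg at h
    have hmem : p ∈ {θ : ℝ | θ ∈ Set.Icc (0 : ℝ) 1 ∧
        α / 2 ≤ ∑ i ∈ Finset.Icc x n,
          (n.choose i : ℝ) * θ ^ i * (1 - θ) ^ (n - i)} := ⟨⟨hp0, hp1⟩, h⟩
    have hle : L x ≤ p := csInf_le ⟨0, fun θ hθ => hθ.1.1⟩ hmem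
    linarith
  -- if p is strictly above the upper bound, the lower tail at p is < α/2
  have hUmem : ∀ x, U x < p →
      (∑ i ∈ Finset.range (x + 1), f i) < α / 2 := by
    intro x hpU
    by_contra h
    push_neg at h
    have hmem : p ∈ {θ : ℝ | θ ∈ Set.Icc (0 : ℝ) 1 ∧
        α / 2 ≤ ∑ i ∈ Finset.range (x + 1),
          (n.choose i : ℝ) * θ ^ i * (1 - θ) ^ (n - i)} := ⟨⟨hp0, hp1⟩, h⟩
    have hle : p ≤ U x := le_csSup ⟨1, fun θ hθ => hθ.1.2⟩ hmem
    linarith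
  show 1 - α ≤ ∑ x ∈ (Finset.range (n + 1)).filter (fun x => L x ≤ p ∧ p ≤ U x), f x
  have hsplit := Finset.sum_filter_add_sum_filter_not (Finset.range (n + 1))
    (fun x => L x ≤ p ∧ p ≤ U x) f
  set bad := (Finset.range (n + 1)).filter (fun x => ¬(L x ≤ p ∧ p ≤ U x)) with hbaddef
  suffices hbad : ∑ x ∈ bad, f x ≤ α by
    have : ∑ x ∈ (Finset.range (n + 1)).filter (fun x => L x ≤ p ∧ p ≤ U x), f x
        = 1 - ∑ x ∈ bad, f x := by
      rw [← hsum, ← hsplit]; ring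
    rw [this]; linarith
  -- split bad into low side and high side
  set A := bad.filter (fun x => p < L x) with hAdef
  set B := bad.filter (fun x => U x < p) with hBdef
  have hcover : bad ⊆ A ∪ B := by
    intro x hx
    have hx' := hx
    rw [hbaddef, Finset.mem_filter] at hx'
    rcases not_and_or.mp hx'.2 with h | h
    · exact Finset.mem_union.2 (Or.inl (Finset.mem_filter.2 ⟨hx, not_le.mp h⟩))
    · exact Finset.mem_union.2 (Or.inr (Finset.mem_filter.2 ⟨hx, not_le.mp h⟩))
  have hA : ∑ x ∈ A, f x ≤ α / 2 := by
    rcases A.eq_empty_or_nonempty with hAe | hAne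
    · rw [hAe]; simp; linarith
    · set x0 := A.min' hAne with hx0def
      have hx0A : x0 ∈ A := A.min'_mem hAne
      have hx0L : p < L x0 := (Finset.mem_filter.mp hx0A).2
      have hsub : A ⊆ Finset.Icc x0 n := by
        intro x hx
        have h1 : x0 ≤ x := A.min'_le x hx
        have h2 : x ∈ bad := Finset.mem_of_mem_filter x hx
        have h3 : x < n + 1 := Finset.mem_range.mp (Finset.mem_of_mem_filter x h2)
        exact Finset.mem_Icc.2 ⟨h1, Nat.lt_succ_iff.mp h3⟩
      calc ∑ x ∈ A, f x ≤ ∑ x ∈ Finset.Icc x0 n, f x :=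
            Finset.sum_le_sum_of_subset_of_nonneg hsub (fun i _ _ => hf0 i)
        _ ≤ α / 2 := le_of_lt (hLmem x0 hx0L)
  have hB : ∑ x ∈ B, f x ≤ α / 2 := by
    rcases B.eq_empty_or_nonempty with hBe | hBne
    · rw [hBe]; simp; linarith
    · set x1 := B.max' hBne with hx1def
      have hx1B : x1 ∈ B := B.max'_mem hBne
      have hx1U : U x1 < p := (Finset.mem_filter.mp hx1B).2
      have hsub : B ⊆ Finset.range (x1 + 1) := by
        intro x hx
        exact Finset.mem_range.2 (Nat.lt_succ_iff.2 (B.le_max' x hx))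
      calc ∑ x ∈ B, f x ≤ ∑ x ∈ Finset.range (x1 + 1), f x :=
            Finset.sum_le_sum_of_subset_of_nonneg hsub (fun i _ _ => hf0 i)
        _ ≤ α / 2 := le_of_lt (hUmem x1 hx1U)
  have h1 : ∑ x ∈ bad, f x ≤ ∑ x ∈ A ∪ B, f x :=
    Finset.sum_le_sum_of_subset_of_nonneg hcover (fun i _ _ => hf0 i)
  have h2 : ∑ x ∈ A ∪ B, f x ≤ ∑ x ∈ A, f x + ∑ x ∈ B, f x := by
    have := Finset.sum_union_inter (s₁ := A) (s₂ := B) (f := f)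
    have hnn : 0 ≤ ∑ x ∈ A ∩ B, f x := Finset.sum_nonneg fun i _ => hf0 i
    linarith
  linarith
end

section
/- Dirichlet–Multinomial correspondence via order statistics: fix d ≥ 2, n ≥ 1, p ∈ Λ_d, and integers 0 ≤ k_1 ≤ k_2 ≤ ⋯ ≤ k_{d−1} ≤ n. Let X ∼ M_d(n,p) be multinomial and let U_1,…,U_n be i.i.d. uniform on [0,1] with order statistics U_{(1)} ≤ ⋯ ≤ U_{(n)} (with the convention U_{(0)} = 0). Then P(X_1 ≥ k_1, X_1+X_2 ≥ k_2, …, X_1+⋯+X_{d−1} ≥ k_{d−1}) equals the Lebesgue measure of the set of (u_1,…,u_n) ∈ [0,1]^n whose order statistics satisfy u_{(k_j)} ≤ p_1 + ⋯ + p_j for every 1 ≤ j ≤ d−1. Equivalently, Σ_{x∈E_d : x_1+⋯+x_j ≥ k_j for all j} (n!/(x_1!⋯x_d!)) ∏_i p_i^{x_i} = Leb^n({u ∈ [0,1]^n : u_{(k_j)} ≤ p_1+⋯+p_j, 1 ≤ j ≤ d−1}). -/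
open Finset MeasureTheory

/-- The `k`-th order statistic `u_{(k)}` of `u ∈ ℝ^n`, for `1 ≤ k ≤ n`, with
the convention `u_{(0)} = 0` (and value `0` out of range). -/
noncomputable def ordStat (n : ℕ) (u : Fin n → ℝ) (k : ℕ) : ℝ :=
  if h : 1 ≤ k ∧ k ≤ n then u (Tuple.sort u ⟨k - 1, by omega⟩) else 0


variable {n d : ℕ}

/-- fiber count of a function -/
def DMcnt (f : Fin n → Fin d) (i : Fin d) : ℕ := (univ.filter (fun m => f m = i)).card

lemma DMcnt_sum (f : Fin n → Fin d) : ∑ i, DMcnt f i = n := by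
  classical
  have := Finset.card_eq_sum_card_fiberwise (f := f) (s := univ) (t := univ)
    (fun x _ => mem_univ _)
  simpa [DMcnt] using this.symm

/-- the fiber equiv used twice -/
def DMfiberEq (x : Fin d → ℕ) (i : Fin d) : {s : Σ j, Fin (x j) // s.1 = i} ≃ Fin (x i) where
  toFun s := Fin.cast (congrArg x s.2) s.1.2
  invFun y := ⟨⟨i, y⟩, rfl⟩
  left_inv := by rintro ⟨⟨j, y⟩, rfl⟩; rfl
  right_inv y := rfl

def DMpackEquiv (f : Fin n → Fin d) (x : Fin d → ℕ) :
    (∀ i, ({m // f m = i} ≃ Fin (x i))) ≃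
      {π : Fin n ≃ Σ i, Fin (x i) // ∀ m, (π m).1 = f m} where
  toFun e := ⟨(Equiv.sigmaFiberEquiv f).symm.trans (Equiv.sigmaCongrRight e), fun m => rfl⟩
  invFun π := fun i =>
    (Equiv.subtypeEquiv π.1 (fun m => by rw [← π.2 m])).trans (DMfiberEq x i)
  left_inv := by
    intro e
    funext i
    apply Equiv.ext
    rintro ⟨m, rfl⟩
    rfl
  right_inv := by
    rintro ⟨π, hπ⟩
    apply Subtype.ext
    apply Equiv.ext
    intro m
    show (⟨f m, _⟩ : Σ i, Fin (x i)) = π m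
    have h := hπ m
    rcases hq : π m with ⟨j, y⟩
    rw [hq] at h
    subst h
    simp [DMfiberEq, hq]
    rfl

lemma DMcard_pack (f : Fin n → Fin d) (x : Fin d → ℕ) :
    Fintype.card {π : Fin n ≃ Σ i, Fin (x i) // ∀ m, (π m).1 = f m} =
      if ∀ i, DMcnt f i = x i then ∏ i, (x i).factorial else 0 := by
  classical
  rw [← Fintype.card_congr (DMpackEquiv f x), Fintype.card_pi]
  split_ifs with h
  · refine Finset.prod_congr rfl fun i _ => ?_
    have hc : Fintype.card {m // f m = i} = x i := by
      rw [Fintype.card_subtype, ← DMcnt, h i]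
    rw [Fintype.card_equiv (Fintype.equivFinOfCardEq hc), hc]
  · push_neg at h
    obtain ⟨i, hi⟩ := h
    refine Finset.prod_eq_zero (mem_univ i) ?_
    rw [Fintype.card_eq_zero_iff]
    constructor
    rintro e
    exact hi (by rw [DMcnt, ← Fintype.card_subtype, Fintype.card_congr e, Fintype.card_fin])

lemma DMcount_mul_factorial (x : Fin d → ℕ) (hx : ∑ i, x i = n) :
    (univ.filter (fun f : Fin n → Fin d => ∀ i, DMcnt f i = x i)).card
      * ∏ i, (x i).factorial = n.factorial := by
  classical
  have hE : Fintype.card (Fin n ≃ Σ i, Fin (x i)) = n.factorial := by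
    rw [Fintype.card_equiv (Fintype.equivOfCardEq (by simp [hx])), Fintype.card_fin]
  have hfib := Finset.card_eq_sum_card_fiberwise
    (f := fun (π : Fin n ≃ Σ i, Fin (x i)) => (fun m => (π m).1))
    (s := univ) (t := univ) (fun a _ => mem_univ _)
  rw [← Fintype.card, hE] at hfib
  have hfc : ∀ f : Fin n → Fin d,
      (univ.filter (fun (π : Fin n ≃ Σ i, Fin (x i)) => (fun m => (π m).1) = f)).card
        = if ∀ i, DMcnt f i = x i then ∏ i, (x i).factorial else 0 := by
    intro f
    rw [← DMcard_pack f x, Fintype.card_subtype]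
    congr 1
    apply Finset.filter_congr
    intro π _
    simp [funext_iff]
  rw [hfib]
  simp_rw [hfc]
  rw [Finset.sum_ite, Finset.sum_const_zero, add_zero, Finset.sum_const, smul_eq_mul]

lemma ordStat_le_iff {n : ℕ} (u : Fin n → ℝ) (kk : ℕ) (h1 : 1 ≤ kk) (h2 : kk ≤ n) (a : ℝ) :
    ordStat n u kk ≤ a ↔ kk ≤ (univ.filter (fun m => u m ≤ a)).card := by
  classical
  have hlt : kk - 1 < n := by omega
  have hmain := Tuple.lt_card_le_iff_apply_le_of_monotone (f := u ∘ Tuple.sort u) (a := a)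
    (j := ⟨kk - 1, hlt⟩) (Tuple.monotone_sort u)
  rw [← Fintype.card_subtype] at hmain
  have hcard : Fintype.card {i // (u ∘ ⇑(Tuple.sort u)) i ≤ a}
      = (univ.filter (fun m => u m ≤ a)).card := by
    have e : {i // (u ∘ ⇑(Tuple.sort u)) i ≤ a} ≃ {m // u m ≤ a} :=
      Equiv.subtypeEquiv (Tuple.sort u) (fun i => Iff.rfl)
    rw [Fintype.card_congr e, Fintype.card_subtype]
  rw [hcard] at hmain
  simp only [Fin.val_mk] at hmain
  have : ordStat n u kk = (u ∘ Tuple.sort u) ⟨kk - 1, hlt⟩ := by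
    rw [ordStat, dif_pos ⟨h1, h2⟩]; rfl
  rw [this, ← hmain]
  omega

section Intervals
variable {d : ℕ} (p : Fin d → ℝ)

/-- partial sums `Q t = ∑_{i ≤ t} p i` -/
def DMQ (t : ℕ) : ℝ := ∑ i ∈ univ.filter (fun i : Fin d => (i : ℕ) ≤ t), p i

variable {p}

lemma DMQ_nonneg (hp0 : ∀ i, 0 ≤ p i) (t : ℕ) : 0 ≤ DMQ p t :=
  Finset.sum_nonneg fun i _ => hp0 i

lemma DMQ_mono (hp0 : ∀ i, 0 ≤ p i) {t t' : ℕ} (h : t ≤ t') : DMQ p t ≤ DMQ p t' := by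
  apply Finset.sum_le_sum_of_subset_of_nonneg
  · intro i hi
    simp only [Finset.mem_filter, Finset.mem_univ, true_and] at hi ⊢
    omega
  · exact fun i _ _ => hp0 i

lemma DMQ_le_one (hp0 : ∀ i, 0 ≤ p i) (hp1 : ∑ i, p i = 1) (t : ℕ) : DMQ p t ≤ 1 := by
  rw [← hp1]
  exact Finset.sum_le_sum_of_subset_of_nonneg (Finset.filter_subset _ _) fun i _ _ => hp0 i

lemma DMQ_last (hp1 : ∑ i, p i = 1) {t : ℕ} (h : d - 1 ≤ t) : DMQ p t = 1 := by
  rw [← hp1, DMQ]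
  congr 1
  rw [Finset.filter_true_of_mem]
  intro i _
  have := i.isLt
  omega

lemma DMQ_succ {t : ℕ} (h : t + 1 < d) :
    DMQ p (t + 1) = DMQ p t + p ⟨t + 1, h⟩ := by
  rw [DMQ, DMQ]
  have : (univ.filter (fun i : Fin d => (i : ℕ) ≤ t + 1))
      = insert ⟨t + 1, h⟩ (univ.filter (fun i : Fin d => (i : ℕ) ≤ t)) := by
    ext i
    simp only [Finset.mem_filter, Finset.mem_univ, true_and, Finset.mem_insert,
      Fin.ext_iff]
    omega
  rw [this, Finset.sum_insert (by simp)]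
  ring

variable (p) in
/-- the partition intervals -/
def DMs (i : Fin d) : Set ℝ :=
  if (i : ℕ) = 0 then Set.Icc 0 (DMQ p 0) else Set.Ioc (DMQ p ((i : ℕ) - 1)) (DMQ p (i : ℕ))

lemma DMs_measurable (i : Fin d) : MeasurableSet (DMs p i) := by
  rw [DMs]; split_ifs
  · exact measurableSet_Icc
  · exact measurableSet_Ioc

lemma DMs_volume (i : Fin d) : volume (DMs p i) = ENNReal.ofReal (p i) := by
  rw [DMs]
  split_ifs with h
  · rw [Real.volume_Icc, sub_zero]
    congr 1
    rw [DMQ]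
    have : (univ.filter (fun j : Fin d => (j : ℕ) ≤ 0)) = {i} := by
      ext j
      simp only [Finset.mem_filter, Finset.mem_univ, true_and, Finset.mem_singleton,
        Fin.ext_iff, h]
      omega
    rw [this, Finset.sum_singleton]
  · rw [Real.volume_Ioc]
    congr 1
    have h1 : (i : ℕ) - 1 + 1 = (i : ℕ) := by omega
    have h2 : (i : ℕ) - 1 + 1 < d := by rw [h1]; exact i.isLt
    have hthis := DMQ_succ (p := p) h2
    have hi : (⟨(i : ℕ) - 1 + 1, h2⟩ : Fin d) = i := Fin.ext h1
    rw [hi, h1] at hthis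
    rw [hthis]
    ring

lemma DMs_subset_Icc (hp0 : ∀ i, 0 ≤ p i) (hp1 : ∑ i, p i = 1) (i : Fin d) : DMs p i ⊆ Set.Icc 0 1 := by
  intro u hu
  rw [DMs] at hu
  split_ifs at hu with h
  · exact ⟨hu.1, hu.2.trans (DMQ_le_one hp0 hp1 _)⟩
  · exact ⟨le_trans (DMQ_nonneg hp0 _) hu.1.le, hu.2.trans (DMQ_le_one hp0 hp1 _)⟩

lemma DMs_le_iff (hp0 : ∀ i, 0 ≤ p i) {i : Fin d} {u : ℝ} (hu : u ∈ DMs p i) (t : ℕ) :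
    u ≤ DMQ p t ↔ (i : ℕ) ≤ t := by
  rw [DMs] at hu
  constructor
  · intro hle
    by_contra hc
    push_neg at hc
    have hi0 : (i : ℕ) ≠ 0 := by omega
    rw [if_neg hi0] at hu
    have : DMQ p t ≤ DMQ p ((i : ℕ) - 1) := DMQ_mono hp0 (by omega)
    exact absurd (hle.trans this) (not_le.2 hu.1)
  · intro hit
    split_ifs at hu with h
    · exact hu.2.trans (DMQ_mono hp0 (by omega))
    · exact hu.2.trans (DMQ_mono hp0 hit)

lemma DMs_cover (hp1 : ∑ i, p i = 1) (hd : 1 ≤ d) {u : ℝ} (hu : u ∈ Set.Icc (0:ℝ) 1) : ∃ i, u ∈ DMs p i := by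
  classical
  have hex : ∃ t, u ≤ DMQ p t := ⟨d - 1, by rw [DMQ_last hp1 le_rfl]; exact hu.2⟩
  let t := Nat.find hex
  have htd : t < d := by
    by_contra hc
    push_neg at hc
    have : d - 1 < t := by omega
    exact absurd (Nat.find_min hex this (by rw [DMQ_last hp1 le_rfl]; exact hu.2)) (by simp)
  refine ⟨⟨t, htd⟩, ?_⟩
  have hle : u ≤ DMQ p t := Nat.find_spec hex
  rw [DMs]
  by_cases h0 : t = 0
  · rw [if_pos (by simpa using h0)]
    exact ⟨hu.1, by rwa [← h0]⟩
  · rw [if_neg (by simpa using h0)]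
    refine ⟨?_, by simpa using hle⟩
    have : ¬ u ≤ DMQ p (t - 1) := Nat.find_min hex (by omega)
    simpa using not_le.1 this

lemma DMs_disjoint (hp0 : ∀ i, 0 ≤ p i) (i i' : Fin d) (h : i ≠ i') : Disjoint (DMs p i) (DMs p i') := by
  rw [Set.disjoint_left]
  intro u hu hu'
  have h1 : (i : ℕ) ≤ (i' : ℕ) := by
    rw [← DMs_le_iff hp0 hu]
    rw [DMs_le_iff hp0 hu']
  have h2 : (i' : ℕ) ≤ (i : ℕ) := by
    rw [← DMs_le_iff hp0 hu']
    rw [DMs_le_iff hp0 hu]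
  exact h (Fin.ext (le_antisymm h1 h2))

end Intervals

/-- **Dirichlet–Multinomial correspondence via order statistics.**
For `X ∼ M_d(n,p)` and `0 ≤ k_1 ≤ ⋯ ≤ k_{d-1} ≤ n`,
`P(X_1 ≥ k_1, …, X_1+⋯+X_{d-1} ≥ k_{d-1})` equals the Lebesgue measure of the
set of `u ∈ [0,1]^n` whose order statistics satisfy
`u_{(k_j)} ≤ p_1 + ⋯ + p_j` for all `1 ≤ j ≤ d-1`. -/
theorem dirichlet_multinomial_correspondence
    (d n : ℕ) (hd : 2 ≤ d) (hn : 1 ≤ n)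
    (p : Fin d → ℝ) (hp0 : ∀ i, 0 ≤ p i) (hp1 : ∑ i, p i = 1)
    (k : Fin (d - 1) → ℕ) (hkn : ∀ j, k j ≤ n) (hkmono : Monotone k) :
    ∑ x ∈ (multinomialSupport d n).filter (fun x =>
        ∀ j : Fin (d - 1),
          k j ≤ ∑ i ∈ Finset.univ.filter (fun i : Fin d => (i : ℕ) ≤ (j : ℕ)),
            (x i : ℕ)),
      multinomialPMF d n p x =
    (MeasureTheory.volume {u : Fin n → ℝ |
        (∀ i, u i ∈ Set.Icc (0 : ℝ) 1) ∧
        ∀ j : Fin (d - 1),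
          ordStat n u (k j) ≤
            ∑ i ∈ Finset.univ.filter (fun i : Fin d => (i : ℕ) ≤ (j : ℕ)),
              p i}).toReal := by
  classical
  have hd1 : 1 ≤ d := by omega
  -- the labeled boxes
  set A : (Fin n → Fin d) → Set (Fin n → ℝ) :=
    fun f => Set.pi Set.univ (fun m => DMs p (f m)) with hA
  -- good labelings
  set good : (Fin n → Fin d) → Prop :=
    fun f => ∀ j : Fin (d - 1),
      k j ≤ (univ.filter (fun m => (f m : ℕ) ≤ (j : ℕ))).card with hgoodd
  -- the target set, with the partial sums rewritten
  have hQ : ∀ j : Fin (d - 1),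
      (∑ i ∈ Finset.univ.filter (fun i : Fin d => (i : ℕ) ≤ (j : ℕ)), p i)
        = DMQ p (j : ℕ) := fun j => rfl
  -- counting coordinates below a level, inside a box
  have hcardeq : ∀ (f : Fin n → Fin d) (u : Fin n → ℝ),
      (∀ m, u m ∈ DMs p (f m)) → ∀ t : ℕ,
      (univ.filter (fun m => u m ≤ DMQ p t)) = (univ.filter (fun m => (f m : ℕ) ≤ t)) := by
    intro f u hu t
    ext m
    simp [DMs_le_iff hp0 (hu m)]
  -- the set equality
  have hSeq : {u : Fin n → ℝ |
        (∀ i, u i ∈ Set.Icc (0 : ℝ) 1) ∧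
        ∀ j : Fin (d - 1),
          ordStat n u (k j) ≤
            ∑ i ∈ Finset.univ.filter (fun i : Fin d => (i : ℕ) ≤ (j : ℕ)), p i}
      = ⋃ f ∈ univ.filter good, A f := by
    ext u
    simp only [Set.mem_setOf_eq, Set.mem_iUnion, Finset.mem_filter, Finset.mem_univ,
      true_and, exists_prop]
    constructor
    · rintro ⟨hu1, hu2⟩
      have hex : ∀ m, ∃ i, u m ∈ DMs p i := fun m => DMs_cover hp1 hd1 (hu1 m)
      choose f hf using hex
      refine ⟨f, ?_, fun m _ => hf m⟩
      intro j
      rcases Nat.eq_zero_or_pos (k j) with hk0 | hk1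
      · simp [hk0]
      · have := hu2 j
        rw [hQ j, ordStat_le_iff u (k j) hk1 (hkn j)] at this
        rwa [hcardeq f u hf (j : ℕ)] at this
    · rintro ⟨f, hgf, huf⟩
      have hf : ∀ m, u m ∈ DMs p (f m) := fun m => huf m (Set.mem_univ m)
      refine ⟨fun m => DMs_subset_Icc hp0 hp1 (f m) (hf m), ?_⟩
      intro j
      rw [hQ j]
      rcases Nat.eq_zero_or_pos (k j) with hk0 | hk1
      · rw [hk0, ordStat, dif_neg (by omega)]
        exact DMQ_nonneg hp0 _
      · rw [ordStat_le_iff u (k j) hk1 (hkn j), hcardeq f u hf (j : ℕ)]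
        exact hgf j
  rw [hSeq]
  -- volume of the union
  have hmeas : ∀ f ∈ univ.filter good, MeasurableSet (A f) :=
    fun f _ => MeasurableSet.univ_pi fun m => DMs_measurable _
  have hdisj : (↑(univ.filter good) : Set (Fin n → Fin d)).PairwiseDisjoint A := by
    intro f _ g _ hfg
    obtain ⟨m, hm⟩ := Function.ne_iff.1 hfg
    show Disjoint (A f) (A g)
    rw [Set.disjoint_left]
    intro u huf hug
    exact Set.disjoint_left.1 (DMs_disjoint hp0 (f m) (g m) hm)
      (huf m (Set.mem_univ m)) (hug m (Set.mem_univ m))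
  rw [measure_biUnion_finset hdisj hmeas]
  -- volume of a box
  have hvol : ∀ f : Fin n → Fin d, volume (A f) = ENNReal.ofReal (∏ m, p (f m)) := by
    intro f
    rw [hA]
    rw [volume_pi_pi]
    rw [ENNReal.ofReal_prod_of_nonneg (fun m _ => hp0 (f m))]
    exact Finset.prod_congr rfl fun m _ => DMs_volume (f m)
  simp_rw [hvol]
  rw [ENNReal.toReal_sum (fun f _ => ENNReal.ofReal_ne_top)]
  have hnn : ∀ f : Fin n → Fin d, 0 ≤ ∏ m, p (f m) :=
    fun f => Finset.prod_nonneg fun m _ => hp0 (f m)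
  have htr : ∑ f ∈ univ.filter good, (ENNReal.ofReal (∏ m, p (f m))).toReal
      = ∑ f ∈ univ.filter good, ∏ m, p (f m) :=
    Finset.sum_congr rfl fun f _ => ENNReal.toReal_ofReal (hnn f)
  rw [htr]
  -- now a purely combinatorial identity
  -- count function into Fin (n+1)
  have hcntle : ∀ (f : Fin n → Fin d) (i : Fin d), DMcnt f i ≤ n := by
    intro f i
    calc DMcnt f i ≤ (univ : Finset (Fin n)).card := Finset.card_filter_le _ _
    _ = n := by simp
  set cF : (Fin n → Fin d) → (Fin d → Fin (n + 1)) :=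
    fun f i => ⟨DMcnt f i, Nat.lt_succ_of_le (hcntle f i)⟩ with hcF
  -- summing fiber counts below a level
  have hsum_cnt : ∀ (f : Fin n → Fin d) (t : ℕ),
      ∑ i ∈ univ.filter (fun i : Fin d => (i : ℕ) ≤ t), DMcnt f i
        = (univ.filter (fun m => (f m : ℕ) ≤ t)).card := by
    intro f t
    have hmaps : ∀ m ∈ univ.filter (fun m => (f m : ℕ) ≤ t),
        f m ∈ univ.filter (fun i : Fin d => (i : ℕ) ≤ t) := by
      intro m hm
      simp only [Finset.mem_filter, Finset.mem_univ, true_and] at hm ⊢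
      exact hm
    rw [Finset.card_eq_sum_card_fiberwise hmaps]
    refine Finset.sum_congr rfl fun i hi => ?_
    simp only [Finset.mem_filter, Finset.mem_univ, true_and] at hi
    rw [DMcnt]
    congr 1
    ext m
    simp only [Finset.mem_filter, Finset.mem_univ, true_and]
    constructor
    · intro h
      exact ⟨by rw [h]; exact hi, h⟩
    · exact fun h => h.2
  have hgood_iff : ∀ f : Fin n → Fin d, good f ↔
      ∀ j : Fin (d - 1), k j ≤ ∑ i ∈ univ.filter (fun i : Fin d => (i : ℕ) ≤ (j : ℕ)),
        DMcnt f i := by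
    intro f
    rw [hgoodd]
    constructor <;> intro h j <;> [rw [hsum_cnt]; rw [← hsum_cnt f]] <;> exact h j
  -- cF maps good functions into the filtered support
  have hmapsT : ∀ f ∈ univ.filter good,
      cF f ∈ (multinomialSupport d n).filter (fun x =>
        ∀ j : Fin (d - 1),
          k j ≤ ∑ i ∈ Finset.univ.filter (fun i : Fin d => (i : ℕ) ≤ (j : ℕ)),
            (x i : ℕ)) := by
    intro f hf
    simp only [Finset.mem_filter, Finset.mem_univ, true_and] at hf ⊢
    constructor
    · simp only [multinomialSupport, Finset.mem_filter, Finset.mem_univ, true_and, hcF]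
      exact DMcnt_sum f
    · intro j
      have := (hgood_iff f).1 hf j
      simpa [hcF] using this
  rw [← Finset.sum_fiberwise_of_maps_to hmapsT (fun f => ∏ m, p (f m))]
  refine Finset.sum_congr rfl fun x hx => ?_
  simp only [Finset.mem_filter, multinomialSupport, Finset.mem_univ, true_and] at hx
  obtain ⟨hxsum, hxcond⟩ := hx
  -- the fiber over x
  have hfib_eq : (univ.filter good).filter (fun f => cF f = x)
      = univ.filter (fun f => ∀ i, DMcnt f i = (x i : ℕ)) := by
    ext f
    simp only [Finset.mem_filter, Finset.mem_univ, true_and]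
    have hcfx : cF f = x ↔ ∀ i, DMcnt f i = (x i : ℕ) := by
      rw [funext_iff]
      refine forall_congr' fun i => ?_
      rw [hcF, Fin.ext_iff]
    rw [hcfx]
    constructor
    · exact fun h => h.2
    · intro h
      refine ⟨?_, h⟩
      rw [hgood_iff]
      intro j
      calc k j ≤ ∑ i ∈ univ.filter (fun i : Fin d => (i : ℕ) ≤ (j : ℕ)), (x i : ℕ) :=
            hxcond j
      _ = ∑ i ∈ univ.filter (fun i : Fin d => (i : ℕ) ≤ (j : ℕ)), DMcnt f i :=
            Finset.sum_congr rfl fun i _ => (h i).symm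
  rw [hfib_eq]
  -- each summand is constant on the fiber
  have hconst : ∀ f ∈ univ.filter (fun f : Fin n → Fin d => ∀ i, DMcnt f i = (x i : ℕ)),
      ∏ m, p (f m) = ∏ i, p i ^ (x i : ℕ) := by
    intro f hf
    simp only [Finset.mem_filter, Finset.mem_univ, true_and] at hf
    rw [← Finset.prod_fiberwise_of_maps_to (g := f) (t := univ)
      (fun m _ => Finset.mem_univ _) (fun m => p (f m))]
    refine Finset.prod_congr rfl fun i _ => ?_
    have : ∏ m ∈ univ.filter (fun m => f m = i), p (f m)
        = ∏ m ∈ univ.filter (fun m => f m = i), p i := by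
      refine Finset.prod_congr rfl fun m hm => ?_
      simp only [Finset.mem_filter] at hm
      rw [hm.2]
    rw [this, Finset.prod_const, ← DMcnt, hf i]
  rw [Finset.sum_congr rfl hconst, Finset.sum_const, nsmul_eq_mul]
  -- the count
  have hcount := DMcount_mul_factorial (n := n) (fun i => (x i : ℕ)) hxsum
  rw [multinomialPMF]
  have hfacpos : (0:ℝ) < ∏ i, (Nat.factorial (x i : ℕ) : ℝ) :=
    Finset.prod_pos fun i _ => by positivity
  have hcountR : ((univ.filter (fun f : Fin n → Fin d => ∀ i, DMcnt f i = (x i : ℕ))).card : ℝ)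
      * ∏ i, (Nat.factorial (x i : ℕ) : ℝ) = (Nat.factorial n : ℝ) := by
    have := congrArg (fun z : ℕ => (z : ℝ)) hcount
    push_cast at this
    convert this using 2
  rw [div_mul_eq_mul_div, eq_comm, eq_div_iff (ne_of_gt hfacpos)]
  linear_combination (∏ i, p i ^ (x i : ℕ)) * hcountR
end
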